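/- Let dA, dE ≥ 1, let ψ ∈ ℂ^{dA} ⊗ ℂ^{dE} be a unit vector, let w ∈ ℂ^{dA} be a unit vector, and let δ ∈ [0, 2]. If ‖tr_E(|ψ⟩⟨ψ|) − |w⟩⟨w|‖₁ ≤ δ, then there exists a unit vector ξ ∈ ℂ^{dE} such that ‖|ψ⟩⟨ψ| − |w ⊗ ξ⟩⟨w ⊗ ξ|‖₁ ≤ √(2δ). -/

import Mathlib

open scoped Matrix Kronecker BigOperators ComplexOrder

/-- The trace norm of a complex matrix: `‖A‖₁ = tr √(Aᴴ A)`. -/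
noncomputable def traceNorm {n : Type*} [Fintype n] [DecidableEq n]
    (A : Matrix n n ℂ) : ℝ :=
  (((Matrix.posSemidef_conjTranspose_mul_self A).1.eigenvectorUnitary : Matrix n n ℂ) *
      Matrix.diagonal (((↑) : ℝ → ℂ) ∘ Real.sqrt ∘ (Matrix.posSemidef_conjTranspose_mul_self A).1.eigenvalues) *
      (star ((Matrix.posSemidef_conjTranspose_mul_self A).1.eigenvectorUnitary : Matrix n n ℂ))).trace.re

/-- The rank-one outer product `|v⟩⟨v|`. -/
def outer {n : Type*} (v : n → ℂ) : Matrix n n ℂ :=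
  Matrix.of fun i j => v i * (starRingEnd ℂ) (v j)

/-- `v` is a unit vector. -/
def IsUnitVec {n : Type*} [Fintype n] (v : n → ℂ) : Prop :=
  ∑ i, ‖v i‖ ^ 2 = 1

/-- Partial trace over the second (E) tensor factor. -/
noncomputable def trE {dA dE : ℕ} (M : Matrix (Fin dA × Fin dE) (Fin dA × Fin dE) ℂ) :
    Matrix (Fin dA) (Fin dA) ℂ :=
  Matrix.of fun i j => ∑ k : Fin dE, M (i, k) (j, k)

/-- Partial trace over the first (A) tensor factor. -/
noncomputable def trA {dA dE : ℕ} (M : Matrix (Fin dA × Fin dE) (Fin dA × Fin dE) ℂ) :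
    Matrix (Fin dE) (Fin dE) ℂ :=
  Matrix.of fun i j => ∑ k : Fin dA, M (k, i) (k, j)

section Helpers
variable {n : Type*} [Fintype n] [DecidableEq n]

lemma conj_mul_self (z : ℂ) : (starRingEnd ℂ) z * z = ((‖z‖ ^ 2 : ℝ) : ℂ) := by
  rw [mul_comm, Complex.mul_conj']
  push_cast
  ring

lemma traceNorm_eq_of {A M : Matrix n n ℂ} (hM : M.PosSemidef) (h : M ^ 2 = Aᴴ * A) :
    traceNorm A = M.trace.re := by
  have hB := (Matrix.posSemidef_conjTranspose_mul_self A).1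
  have hcfc : cfc Real.sqrt (Aᴴ * A) = M := by
    rw [← h, ← cfc_comp_pow Real.sqrt 2 M (ha := hM.1.isSelfAdjoint)]
    have hspec : Set.EqOn (Real.sqrt <| · ^ 2) (fun x : ℝ => x) (spectrum ℝ M) := by
      intro x hx
      rw [hM.1.spectrum_real_eq_range_eigenvalues] at hx
      obtain ⟨i, rfl⟩ := hx
      exact Real.sqrt_sq (hM.eigenvalues_nonneg i)
    rw [cfc_congr hspec, cfc_id' ℝ M hM.1.isSelfAdjoint]
  unfold traceNorm
  rw [← hcfc, hB.cfc_eq]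
  rfl

lemma traceNorm_zero : traceNorm (0 : Matrix n n ℂ) = 0 := by
  rw [traceNorm_eq_of (Matrix.PosSemidef.zero) (by simp)]
  simp

lemma star_dotProduct_self (v : n → ℂ) :
    dotProduct (star v) v = ((∑ i, ‖v i‖ ^ 2 : ℝ) : ℂ) := by
  simp only [dotProduct, Pi.star_apply, Complex.star_def]
  rw [Complex.ofReal_sum]
  exact Finset.sum_congr rfl fun i _ => conj_mul_self (v i)

end Helpers

set_option linter.unusedSectionVars false

section Op
variable {n : Type*} [Fintype n] [DecidableEq n]

def op (a b : n → ℂ) : Matrix n n ℂ :=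
  Matrix.of fun i j => a i * (starRingEnd ℂ) (b j)

lemma outer_eq_op (v : n → ℂ) : outer v = op v v := rfl

lemma op_mul_op (a b c d : n → ℂ) :
    op a b * op c d = (dotProduct (star b) c) • op a d := by
  ext i j
  simp only [Matrix.mul_apply, op, Matrix.of_apply, Matrix.smul_apply, dotProduct,
    Pi.star_apply, Complex.star_def, smul_eq_mul, Finset.sum_mul]
  exact Finset.sum_congr rfl fun k _ => by ring

lemma trace_op (a b : n → ℂ) : (op a b).trace = dotProduct (star b) a := by
  simp only [Matrix.trace, Matrix.diag, op, Matrix.of_apply, dotProduct, Pi.star_apply,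
    Complex.star_def]
  exact Finset.sum_congr rfl fun k _ => by ring

lemma op_conjTranspose (a b : n → ℂ) : (op a b)ᴴ = op b a := by
  ext i j
  simp [op, Matrix.conjTranspose_apply, mul_comm]

lemma outer_isHermitian (v : n → ℂ) : (outer v).IsHermitian := by
  rw [outer_eq_op]; exact op_conjTranspose v v

end Op

section Spectral
variable {n : Type*} [Fintype n] [DecidableEq n]

namespace HermHelper

variable {X : Matrix n n ℂ}

noncomputable def U (hX : X.IsHermitian) : Matrix n n ℂ := hX.eigenvectorUnitary

lemma hUU (hX : X.IsHermitian) : U hX * star (U hX) = 1 :=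
  Matrix.mem_unitaryGroup_iff.mp hX.eigenvectorUnitary.2

lemma hUU' (hX : X.IsHermitian) : star (U hX) * U hX = 1 :=
  Matrix.mem_unitaryGroup_iff'.mp hX.eigenvectorUnitary.2

lemma spec (hX : X.IsHermitian) :
    X = U hX * Matrix.diagonal (fun i => ((hX.eigenvalues i : ℝ) : ℂ)) * star (U hX) :=
  hX.spectral_theorem

lemma trace_conj (hX : X.IsHermitian) (d : n → ℂ) :
    (U hX * Matrix.diagonal d * star (U hX)).trace = ∑ i, d i := by
  rw [Matrix.trace_mul_cycle, hUU' hX, one_mul, Matrix.trace_diagonal]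


lemma conj_mul_conj (hX : X.IsHermitian) (d e : n → ℂ) :
    (U hX * Matrix.diagonal d * star (U hX)) * (U hX * Matrix.diagonal e * star (U hX))
      = U hX * Matrix.diagonal (fun i => d i * e i) * star (U hX) := by
  have : U hX * Matrix.diagonal d * star (U hX) * (U hX * Matrix.diagonal e * star (U hX))
      = U hX * (Matrix.diagonal d * (star (U hX) * U hX) * Matrix.diagonal e) * star (U hX) := by
    simp only [mul_assoc]
  rw [this, hUU' hX, mul_one, Matrix.diagonal_mul_diagonal]

lemma traceNorm_herm (hX : X.IsHermitian) :
    traceNorm X = ∑ i, |hX.eigenvalues i| := by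
  set M : Matrix n n ℂ :=
    U hX * Matrix.diagonal (fun i => ((|hX.eigenvalues i| : ℝ) : ℂ)) * star (U hX) with hM
  have hpsd : M.PosSemidef := by
    apply Matrix.PosSemidef.mul_mul_conjTranspose_same
    · refine Matrix.PosSemidef.diagonal fun i => ?_
      show (0 : ℂ) ≤ _
      rw [Complex.zero_le_real]; exact abs_nonneg _
  have hsq : M ^ 2 = Xᴴ * X := by
    rw [hX.eq, pow_two, hM, conj_mul_conj hX]
    conv_rhs => rw [spec hX, conj_mul_conj hX]
    have he : (fun i => ((|hX.eigenvalues i| : ℝ) : ℂ) * ((|hX.eigenvalues i| : ℝ) : ℂ))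
        = fun i => ((hX.eigenvalues i : ℝ) : ℂ) * ((hX.eigenvalues i : ℝ) : ℂ) := by
      funext i
      rw [← Complex.ofReal_mul, ← Complex.ofReal_mul, abs_mul_abs_self]
    rw [he]
  rw [traceNorm_eq_of hpsd hsq, hM, trace_conj hX]
  rw [Complex.re_sum]
  norm_num

lemma trace_herm (hX : X.IsHermitian) : X.trace = ((∑ i, hX.eigenvalues i : ℝ) : ℂ) := by
  conv_lhs => rw [spec hX]
  rw [trace_conj hX]
  push_cast
  rfl

end HermHelper
end Spectral

section Step1
variable {n : Type*} [Fintype n] [DecidableEq n]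
open HermHelper

lemma neg_qf_le_half_traceNorm {X : Matrix n n ℂ} (hX : X.IsHermitian) (hTr : X.trace = 0)
    (w : n → ℂ) (hw : IsUnitVec w) :
    -(dotProduct (star w) (X *ᵥ w)).re ≤ traceNorm X / 2 := by
  set lam := hX.eigenvalues with hlam
  set v : n → ℂ := star (U hX) *ᵥ w with hv
  have hstar : star w ᵥ* U hX = star v := by
    rw [hv, Matrix.star_mulVec]
    congr 1
    simp [Matrix.star_eq_conjTranspose]
  have hqf : dotProduct (star w) (X *ᵥ w)
      = ∑ i, (starRingEnd ℂ) (v i) * (((lam i : ℝ) : ℂ) * v i) := by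
    conv_lhs => rw [spec hX, ← Matrix.mulVec_mulVec, ← Matrix.mulVec_mulVec,
      Matrix.dotProduct_mulVec, hstar]
    simp [dotProduct, Matrix.mulVec_diagonal, hv, hlam]
  have hterm : ∀ i, ((starRingEnd ℂ) (v i) * (((lam i : ℝ) : ℂ) * v i)).re
      = lam i * ‖v i‖ ^ 2 := by
    intro i
    have : (starRingEnd ℂ) (v i) * (((lam i : ℝ) : ℂ) * v i)
        = ((lam i * ‖v i‖ ^ 2 : ℝ) : ℂ) := by
      rw [mul_left_comm, conj_mul_self]
      push_cast
      ring
    rw [this, Complex.ofReal_re]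
  have hv1 : ∑ i, ‖v i‖ ^ 2 = 1 := by
    have h1 : dotProduct (star v) v = dotProduct (star w) w := by
      rw [← hstar, hv, ← Matrix.dotProduct_mulVec, Matrix.mulVec_mulVec, hUU hX,
        Matrix.one_mulVec]
    rw [star_dotProduct_self, star_dotProduct_self, hw] at h1
    exact_mod_cast h1
  have hlam0 : ∑ i, lam i = 0 := by
    have := trace_herm hX
    rw [hTr] at this
    exact_mod_cast this.symm
  have ht0 : ∀ i, (0:ℝ) ≤ ‖v i‖ ^ 2 := fun i => sq_nonneg _
  have ht1 : ∀ i, ‖v i‖ ^ 2 ≤ 1 := by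
    intro i
    rw [← hv1]
    exact Finset.single_le_sum (f := fun j => ‖v j‖ ^ 2) (fun j _ => ht0 j) (Finset.mem_univ i)
  rw [hqf, traceNorm_herm hX, Complex.re_sum]
  simp only [hterm]
  rw [← Finset.sum_neg_distrib]
  have hle : ∑ i, -(lam i * ‖v i‖ ^ 2) ≤ ∑ i, (|lam i| - lam i) / 2 := by
    refine Finset.sum_le_sum fun i _ => ?_
    rcases le_or_gt 0 (lam i) with h | h
    · rw [abs_of_nonneg h]
      nlinarith [mul_nonneg h (ht0 i)]
    · rw [abs_of_neg h]
      nlinarith [mul_le_of_le_one_right (neg_nonneg.2 h.le) (ht1 i)]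
  refine hle.trans (le_of_eq ?_)
  have h2 : ∑ i, (|lam i| - lam i) / 2 = (∑ i, |lam i|) / 2 - (∑ i, lam i) / 2 := by
    rw [← Finset.sum_div, Finset.sum_sub_distrib, sub_div]
  rw [h2, hlam0]
  simp [hlam]

end Step1

section Step2
variable {n : Type*} [Fintype n] [DecidableEq n]

lemma psd_real_smul {M : Matrix n n ℂ} (hM : M.PosSemidef) {c : ℝ} (hc : 0 ≤ c) :
    (((c : ℝ) : ℂ) • M).PosSemidef := by
  exact hM.smul (by exact_mod_cast hc)

lemma matrix_eq_zero_of_trace_conjTranspose {B : Matrix n n ℂ}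
    (h : (Bᴴ * B).trace = 0) : B = 0 := by
  have h2 : ∑ j, ∑ i, ‖B i j‖ ^ 2 = 0 := by
    have : (Bᴴ * B).trace = ((∑ j, ∑ i, ‖B i j‖ ^ 2 : ℝ) : ℂ) := by
      rw [Matrix.trace]
      push_cast
      refine Finset.sum_congr rfl fun j _ => ?_
      rw [Matrix.diag_apply, Matrix.mul_apply]
      refine Finset.sum_congr rfl fun i _ => ?_
      rw [Matrix.conjTranspose_apply, Complex.star_def, conj_mul_self]
      norm_cast
    rw [this] at h
    exact_mod_cast h
  ext i j
  have hj := (Finset.sum_eq_zero_iff_of_nonneg (fun j _ =>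
    Finset.sum_nonneg fun i _ => sq_nonneg ‖B i j‖)).mp h2 j (Finset.mem_univ j)
  have hij := (Finset.sum_eq_zero_iff_of_nonneg (fun i _ => sq_nonneg ‖B i j‖)).mp hj i
    (Finset.mem_univ i)
  simpa using pow_eq_zero_iff (n := 2) (by norm_num) |>.mp hij

lemma star_dot_conj (a b : n → ℂ) :
    dotProduct (star b) a = (starRingEnd ℂ) (dotProduct (star a) b) := by
  simp only [dotProduct, Pi.star_apply, Complex.star_def, map_sum, map_mul,
    Complex.conj_conj]
  exact Finset.sum_congr rfl fun i _ => mul_comm _ _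

end Step2

section Step2b
variable {n : Type*} [Fintype n] [DecidableEq n]

lemma traceNorm_outer_sub_outer (ψ φ : n → ℂ) (hψ : IsUnitVec ψ) (hφ : IsUnitVec φ) :
    traceNorm (outer ψ - outer φ)
      = 2 * Real.sqrt (1 - ‖dotProduct (star ψ) φ‖ ^ 2) := by
  set u : ℂ := dotProduct (star ψ) φ with hu
  set s : ℝ := 1 - ‖u‖ ^ 2 with hs
  set A : Matrix n n ℂ := outer ψ - outer φ with hA
  have hψ1 : dotProduct (star ψ) ψ = 1 := by
    rw [star_dotProduct_self, hψ, Complex.ofReal_one]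
  have hφ1 : dotProduct (star φ) φ = 1 := by
    rw [star_dotProduct_self, hφ, Complex.ofReal_one]
  have hconj : dotProduct (star φ) ψ = (starRingEnd ℂ) u := star_dot_conj ψ φ
  have huu : (starRingEnd ℂ) u * u = ((‖u‖ ^ 2 : ℝ) : ℂ) := conj_mul_self u
  have hAherm : Aᴴ = A := by
    rw [hA, Matrix.conjTranspose_sub, (outer_isHermitian ψ).eq, (outer_isHermitian φ).eq]
  have hA2 : A * A = outer ψ + outer φ - u • op ψ φ - (starRingEnd ℂ) u • op φ ψ := by
    rw [hA, outer_eq_op, outer_eq_op, sub_mul, mul_sub, mul_sub,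
      op_mul_op, op_mul_op, op_mul_op, op_mul_op, hψ1, hφ1, hu, hconj, one_smul, one_smul]
    abel
  have hA3 : A * A * A = ((s : ℝ) : ℂ) • A := by
    rw [hA2, hA, outer_eq_op, outer_eq_op]
    simp only [sub_mul, add_mul, mul_sub, Matrix.smul_mul, op_mul_op, hψ1, hφ1, hconj,
      one_smul, smul_smul]
    simp only [← hu]
    rw [hs, Complex.ofReal_sub, Complex.ofReal_one, ← huu]
    module
  have htr : (A * A).trace = ((2 * s : ℝ) : ℂ) := by
    rw [hA2]
    simp only [Matrix.trace_sub, Matrix.trace_add, Matrix.trace_smul, outer_eq_op, trace_op,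
      hψ1, hφ1, hu, hconj, smul_eq_mul]
    rw [mul_comm u ((starRingEnd ℂ) u), huu, hs]
    push_cast
    ring
  have hs0 : 0 ≤ s := by
    have hcs : ‖u‖ ≤ 1 := by
      have h := norm_inner_le_norm (𝕜 := ℂ) ((WithLp.equiv 2 (n → ℂ)).symm ψ)
        ((WithLp.equiv 2 (n → ℂ)).symm φ)
      rw [show inner ℂ ((WithLp.equiv 2 (n → ℂ)).symm ψ) ((WithLp.equiv 2 (n → ℂ)).symm φ)
          = dotProduct (star ψ) φ from by rw [dotProduct_comm]; rfl] at h
      have hnψ : ‖(WithLp.equiv 2 (n → ℂ)).symm ψ‖ = 1 := by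
        rw [EuclideanSpace.norm_eq]
        change √(∑ i, ‖ψ i‖ ^ 2) = 1
        rw [hψ, Real.sqrt_one]
      have hnφ : ‖(WithLp.equiv 2 (n → ℂ)).symm φ‖ = 1 := by
        rw [EuclideanSpace.norm_eq]
        change √(∑ i, ‖φ i‖ ^ 2) = 1
        rw [hφ, Real.sqrt_one]
      rw [hnψ, hnφ, mul_one] at h
      exact hu ▸ h
    nlinarith [norm_nonneg u]
  rcases eq_or_lt_of_le hs0 with hseq | hslt
  · -- s = 0 : A = 0
    have hA0 : A = 0 := by
      apply matrix_eq_zero_of_trace_conjTranspose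
      rw [hAherm, htr, ← hseq]
      norm_num
    rw [hA0, traceNorm_zero, ← hseq]
    simp
  · -- s > 0
    set r : ℝ := Real.sqrt s with hr
    have hrpos : 0 < r := Real.sqrt_pos.mpr hslt
    have hr2 : r ^ 2 = s := Real.sq_sqrt hs0
    set M : Matrix n n ℂ := ((r⁻¹ : ℝ) : ℂ) • (A * A) with hM
    have hAA : (A * A).PosSemidef := by
      have := Matrix.posSemidef_conjTranspose_mul_self A
      rwa [hAherm] at this
    have hMpsd : M.PosSemidef := psd_real_smul hAA (by positivity)
    have hMsq : M ^ 2 = Aᴴ * A := by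
      have hA4 : A * A * (A * A) = ((s : ℝ) : ℂ) • (A * A) := by
        rw [← mul_assoc, hA3, Matrix.smul_mul]
      rw [pow_two, hM, Matrix.smul_mul, Matrix.mul_smul, smul_smul, hA4, smul_smul, hAherm]
      have hrne : r ≠ 0 := hrpos.ne'
      have hc : ((r⁻¹ : ℝ) : ℂ) * ((r⁻¹ : ℝ) : ℂ) * ((s : ℝ) : ℂ) = 1 := by
        rw [← Complex.ofReal_mul, ← Complex.ofReal_mul, ← hr2]
        norm_cast
        field_simp
      rw [hc, one_smul]
    rw [traceNorm_eq_of hMpsd hMsq, hM, Matrix.trace_smul, htr]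
    have hrne : r ≠ 0 := hrpos.ne'
    have hfin : ((r⁻¹ : ℝ) : ℂ) • ((2 * s : ℝ) : ℂ) = ((2 * r : ℝ) : ℂ) := by
      rw [smul_eq_mul, ← Complex.ofReal_mul]
      congr 1
      rw [← hr2]
      field_simp
    rw [hfin, Complex.ofReal_re]

end Step2b


theorem approx_pure_marginal_implies_approx_product
    {dA dE : ℕ} (hdA : 1 ≤ dA) (hdE : 1 ≤ dE)
    (ψ : Fin dA × Fin dE → ℂ) (hψ : IsUnitVec ψ)
    (w : Fin dA → ℂ) (hw : IsUnitVec w)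
    (δ : ℝ) (hδ0 : 0 ≤ δ) (hδ2 : δ ≤ 2)
    (hmarg : traceNorm (trE (outer ψ) - outer w) ≤ δ) :
    ∃ ξ : Fin dE → ℂ, IsUnitVec ξ ∧
      traceNorm (outer ψ - outer (fun p : Fin dA × Fin dE => w p.1 * ξ p.2))
        ≤ Real.sqrt (2 * δ) := by

  classical
  set X : Matrix (Fin dA) (Fin dA) ℂ := trE (outer ψ) - outer w with hX
  set ξ' : Fin dE → ℂ := fun k => ∑ i, (starRingEnd ℂ) (w i) * ψ (i, k) with hxi
  set t : ℝ := ∑ k, ‖ξ' k‖ ^ 2 with ht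
  have hw1 : dotProduct (star w) w = 1 := by
    rw [star_dotProduct_self, hw, Complex.ofReal_one]
  have hconjxi : ∀ k, (starRingEnd ℂ) (ξ' k) = ∑ i, w i * (starRingEnd ℂ) (ψ (i, k)) := by
    intro k
    rw [hxi]
    rw [map_sum]
    exact Finset.sum_congr rfl fun i _ => by simp [map_mul]
  -- Hermitian
  have hXherm : X.IsHermitian := by
    rw [hX]
    apply Matrix.IsHermitian.sub _ (outer_isHermitian w)
    ext i j
    simp only [Matrix.conjTranspose_apply, trE, outer, Matrix.of_apply, map_sum, map_mul,
      Complex.star_def, Complex.conj_conj]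
    exact Finset.sum_congr rfl fun k _ => mul_comm _ _
  -- trace zero
  have htrE : (trE (outer ψ)).trace = 1 := by
    rw [Matrix.trace]
    have : ∀ i, (trE (outer ψ)).diag i = ∑ k, ((‖ψ (i, k)‖ ^ 2 : ℝ) : ℂ) := by
      intro i
      simp only [Matrix.diag_apply, trE, outer, Matrix.of_apply]
      exact Finset.sum_congr rfl fun k _ => by rw [mul_comm, conj_mul_self]
    simp only [this]
    have hψsum : ∑ p : Fin dA × Fin dE, ((‖ψ p‖ ^ 2 : ℝ) : ℂ) = 1 := by
      rw [← Complex.ofReal_sum, show (∑ p : Fin dA × Fin dE, ‖ψ p‖ ^ 2) = 1 from hψ,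
        Complex.ofReal_one]
    exact ((Fintype.sum_prod_type
      (f := fun p : Fin dA × Fin dE => ((‖ψ p‖ ^ 2 : ℝ) : ℂ))).symm).trans hψsum
  have hXtr : X.trace = 0 := by
    rw [hX, Matrix.trace_sub, htrE, outer_eq_op, trace_op, hw1, sub_self]
  -- quadratic form
  have houterw : outer w *ᵥ w = w := by
    funext i
    simp only [Matrix.mulVec, dotProduct, outer, Matrix.of_apply]
    rw [show (∑ j, w i * (starRingEnd ℂ) (w j) * w j) = w i * ∑ j, (starRingEnd ℂ) (w j) * w j
      from by rw [Finset.mul_sum]; exact Finset.sum_congr rfl fun j _ => by ring]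
    rw [show (∑ j, (starRingEnd ℂ) (w j) * w j) = 1 from hw1, mul_one]
  have lhs_eq : dotProduct (star w) (trE (outer ψ) *ᵥ w)
      = ∑ i, ∑ j, ∑ k, (starRingEnd ℂ) (w i) * ψ (i, k) * ((starRingEnd ℂ) (ψ (j, k)) * w j) := by
    simp only [dotProduct, Matrix.mulVec, trE, outer, Matrix.of_apply, Pi.star_apply,
      Complex.star_def, Finset.sum_mul, Finset.mul_sum]
    exact Finset.sum_congr rfl fun i _ => Finset.sum_congr rfl fun j _ =>
      Finset.sum_congr rfl fun k _ => by ring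
  have rhs_eq : ∑ k, ξ' k * (starRingEnd ℂ) (ξ' k)
      = ∑ k, ∑ i, ∑ j, (starRingEnd ℂ) (w i) * ψ (i, k) * ((starRingEnd ℂ) (ψ (j, k)) * w j) := by
    refine Finset.sum_congr rfl fun k _ => ?_
    rw [hconjxi k, hxi]
    rw [Finset.sum_mul]
    refine Finset.sum_congr rfl fun i _ => ?_
    rw [Finset.mul_sum]
    exact Finset.sum_congr rfl fun j _ => by ring
  have hqf2 : dotProduct (star w) (trE (outer ψ) *ᵥ w) = ((t : ℝ) : ℂ) := by
    rw [lhs_eq, ht, Complex.ofReal_sum]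
    have step : ∑ k, ξ' k * (starRingEnd ℂ) (ξ' k) = ∑ k, ((‖ξ' k‖ ^ 2 : ℝ) : ℂ) :=
      Finset.sum_congr rfl fun k _ => by rw [mul_comm, conj_mul_self]
    rw [← step, rhs_eq]
    calc ∑ i, ∑ j, ∑ k, (starRingEnd ℂ) (w i) * ψ (i, k) * ((starRingEnd ℂ) (ψ (j, k)) * w j)
        = ∑ i, ∑ k, ∑ j, (starRingEnd ℂ) (w i) * ψ (i, k) * ((starRingEnd ℂ) (ψ (j, k)) * w j) :=
          Finset.sum_congr rfl fun i _ => Finset.sum_comm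
      _ = ∑ k, ∑ i, ∑ j, (starRingEnd ℂ) (w i) * ψ (i, k) * ((starRingEnd ℂ) (ψ (j, k)) * w j) :=
          Finset.sum_comm
  have hstep1 : 1 - t ≤ δ / 2 := by
    have h1 := neg_qf_le_half_traceNorm hXherm hXtr w hw
    have hqfX : dotProduct (star w) (X *ᵥ w) = ((t : ℝ) : ℂ) - 1 := by
      rw [hX, Matrix.sub_mulVec, dotProduct_sub, hqf2, houterw, hw1]
    rw [hqfX] at h1
    simp only [Complex.sub_re, Complex.ofReal_re, Complex.one_re, neg_sub] at h1
    have h2 : traceNorm X / 2 ≤ δ / 2 := by linarith [hmarg]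
    linarith
  -- choose ξ
  have main : ∀ ξ : Fin dE → ℂ, IsUnitVec ξ →
      (1 - ‖dotProduct (star ψ) (fun p : Fin dA × Fin dE => w p.1 * ξ p.2)‖ ^ 2 ≤ δ / 2) →
      traceNorm (outer ψ - outer (fun p : Fin dA × Fin dE => w p.1 * ξ p.2))
        ≤ Real.sqrt (2 * δ) := by
    intro ξ hξ hbound
    have hφunit : IsUnitVec (fun p : Fin dA × Fin dE => w p.1 * ξ p.2) := by
      unfold IsUnitVec
      rw [Fintype.sum_prod_type]
      simp only [norm_mul, mul_pow]
      rw [← Finset.sum_mul_sum]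
      rw [hw, hξ, mul_one]
    rw [traceNorm_outer_sub_outer ψ _ hψ hφunit]
    have h4 : 2 * Real.sqrt (1 - ‖dotProduct (star ψ)
        (fun p : Fin dA × Fin dE => w p.1 * ξ p.2)‖ ^ 2)
        = Real.sqrt (4 * (1 - ‖dotProduct (star ψ)
          (fun p : Fin dA × Fin dE => w p.1 * ξ p.2)‖ ^ 2)) := by
      rw [show (4 : ℝ) = 2 ^ 2 by norm_num, Real.sqrt_mul (by positivity), Real.sqrt_sq]
      norm_num
    rw [h4]
    apply Real.sqrt_le_sqrt
    linarith
  by_cases ht0 : t = 0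
  · -- δ ≥ 2 case
    have hδge : 1 ≤ δ / 2 := by rw [ht0] at hstep1; linarith
    set ξ : Fin dE → ℂ := Pi.single (⟨0, hdE⟩ : Fin dE) 1 with hxidef
    have hξunit : IsUnitVec ξ := by
      unfold IsUnitVec
      rw [hxidef]
      rw [Finset.sum_eq_single (⟨0, hdE⟩ : Fin dE)]
      · simp
      · intro b _ hb; simp [Pi.single_apply, hb]
      · simp
    refine ⟨ξ, hξunit, main ξ hξunit ?_⟩
    nlinarith [sq_nonneg ‖dotProduct (star ψ) (fun p : Fin dA × Fin dE => w p.1 * ξ p.2)‖]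
  · have htpos : 0 < t :=
      lt_of_le_of_ne (Finset.sum_nonneg fun k _ => sq_nonneg _) (Ne.symm ht0)
    set r : ℝ := Real.sqrt t with hr
    have hrpos : 0 < r := Real.sqrt_pos.mpr htpos
    have hr2 : r ^ 2 = t := Real.sq_sqrt htpos.le
    set ξ : Fin dE → ℂ := fun k => ((r⁻¹ : ℝ) : ℂ) * ξ' k with hxidef
    have hξunit : IsUnitVec ξ := by
      unfold IsUnitVec
      simp only [hxidef, norm_mul, mul_pow, Complex.norm_real, Real.norm_eq_abs,
        abs_of_nonneg (inv_nonneg.mpr hrpos.le)]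
      rw [← Finset.mul_sum, ← ht]
      rw [← hr2]
      field_simp
    have hu : dotProduct (star ψ) (fun p : Fin dA × Fin dE => w p.1 * ξ p.2)
        = ((r⁻¹ * t : ℝ) : ℂ) := by
      rw [dotProduct]
      rw [Fintype.sum_prod_type]
      have hsum : ∀ (i : Fin dA) (k : Fin dE),
          star ψ (i, k) * (w i * ξ k)
            = ((r⁻¹ : ℝ) : ℂ) * (w i * (starRingEnd ℂ) (ψ (i, k)) * ξ' k) := by
        intro i k
        simp only [hxidef, Pi.star_apply, Complex.star_def]
        ring
      simp only [hsum]
      rw [show (∑ i, ∑ k, ((r⁻¹ : ℝ) : ℂ) * (w i * (starRingEnd ℂ) (ψ (i, k)) * ξ' k))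
          = ((r⁻¹ : ℝ) : ℂ) * ∑ k, ∑ i, w i * (starRingEnd ℂ) (ψ (i, k)) * ξ' k from by
        rw [Finset.mul_sum, Finset.sum_comm]
        exact Finset.sum_congr rfl fun k _ => by rw [Finset.mul_sum]]
      have : ∀ k, ∑ i, w i * (starRingEnd ℂ) (ψ (i, k)) * ξ' k
          = ((‖ξ' k‖ ^ 2 : ℝ) : ℂ) := by
        intro k
        rw [← Finset.sum_mul, ← hconjxi k, conj_mul_self]
      simp only [this]
      rw [← Complex.ofReal_sum _ fun k => ‖ξ' k‖ ^ 2, ← ht, Complex.ofReal_mul]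
    refine ⟨ξ, hξunit, main ξ hξunit ?_⟩
    rw [hu]
    have : ‖((r⁻¹ * t : ℝ) : ℂ)‖ ^ 2 = t := by
      rw [Complex.norm_real, Real.norm_eq_abs, sq_abs]
      rw [← hr2]
      field_simp
    rw [this]
    exact hstep1
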